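/- Let k be a field with char k ≠ 2, and let τ act on K(x,y), where K = k(√a) with Gal(K/k) = ⟨τ restricted to K⟩, by τ(√a) = −√a, τ(x) = y, τ(y) = x. Then K(x,y)^⟨τ⟩ = k(x + y, √a(x − y)), which is purely transcendental over k. -/

import Mathlib

open IntermediateField Module

/-- `L` is purely transcendental over `k` of transcendence degree `m`:
it is generated over `k` by `m` algebraically independent elements. -/
def IsRationalOfDeg (k : Type) {F : Type} [Field k] [Field F] [Algebra k F]
    (L : IntermediateField k F) (m : ℕ) : Prop :=
  ∃ u : Fin m → F, (∀ i, u i ∈ L) ∧ AlgebraicIndependent k u ∧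
    L = IntermediateField.adjoin k (Set.range u)

/-- For `K = k(√a)` and `τ : √a ↦ −√a, x ↦ y, y ↦ x` on `K(x,y)`, the fixed
field is `k(x + y, √a(x − y))`, which is purely transcendental over `k`. -/
theorem stmt10 (k K F : Type) [Field k] [Field K] [Field F]
    [Algebra k K] [Algebra K F] [Algebra k F] [IsScalarTower k K F]
    (h2 : (2 : k) ≠ 0) (a : k) (ha : a ≠ 0)
    (hnsq : ¬∃ r : k, r ^ 2 = a)
    (sqa : K) (hsqa : sqa ^ 2 = algebraMap k K a)
    (hKgen : IntermediateField.adjoin k {sqa} = ⊤)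
    (x y : F) (hind : AlgebraicIndependent K ![x, y])
    (hadj : IntermediateField.adjoin K {x, y} = ⊤)
    (τ : F ≃ₐ[k] F)
    (hτK : τ (algebraMap K F sqa) = - algebraMap K F sqa)
    (hx : τ x = y) (hy : τ y = x) :
    IntermediateField.fixedField (Subgroup.zpowers τ) =
      IntermediateField.adjoin k {x + y, algebraMap K F sqa * (x - y)} ∧
    IsRationalOfDeg k (IntermediateField.fixedField (Subgroup.zpowers τ)) 2 := by
  -- Notation
  set sF : F := algebraMap K F sqa with hsF_def
  set s : F := x + y with hs_def
  set t : F := sF * (x - y) with ht_def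
  set L : IntermediateField k F := IntermediateField.adjoin k {s, t} with hL_def
  -- basic nonvanishing facts
  have hinjkK : Function.Injective (algebraMap k K) := (algebraMap k K).injective
  have hinjKF : Function.Injective (algebraMap K F) := (algebraMap K F).injective
  have hinjkF : Function.Injective (algebraMap k F) := (algebraMap k F).injective
  have hsqa0 : sqa ≠ 0 := by
    intro h
    apply ha
    have : algebraMap k K a = 0 := by rw [← hsqa, h]; ring
    exact hinjkK (by simpa using this)
  have hsF0 : sF ≠ 0 := by
    simp only [hsF_def]
    exact fun h => hsqa0 (hinjKF (by simpa using h))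
  have h2K : (2 : K) ≠ 0 := by
    intro h
    exact h2 (hinjkK (by simp only [map_ofNat, map_zero, h]))
  have h2F : (2 : F) ≠ 0 := by
    intro h
    exact h2 (hinjkF (by simp only [map_ofNat, map_zero, h]))
  have hsF2 : sF ^ 2 = algebraMap k F a := by
    rw [hsF_def, ← map_pow, hsqa, ← IsScalarTower.algebraMap_apply]
  -- Step A : F is generated over k by sF, x, y
  have Stop : IntermediateField.adjoin k {sF, x, y} = ⊤ := by
    rw [eq_top_iff]
    rintro z -
    have hz : z ∈ IntermediateField.adjoin K {x, y} := by rw [hadj]; trivial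
    induction hz using IntermediateField.adjoin_induction with
    | mem w hw =>
      rcases hw with h | h
      · exact subset_adjoin _ _ (by simp [h])
      · exact subset_adjoin _ _ (by simp [h])
    | algebraMap c =>
      have hc : c ∈ IntermediateField.adjoin k {sqa} := by rw [hKgen]; trivial
      induction hc using IntermediateField.adjoin_induction with
      | mem w hw =>
        rcases hw with rfl
        exact subset_adjoin _ _ (by simp [hsF_def])
      | algebraMap b =>
        rw [← IsScalarTower.algebraMap_apply]
        exact IntermediateField.algebraMap_mem _ b
      | add u v _ _ hu hv => rw [map_add]; exact add_mem hu hv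
      | inv u _ hu => rw [map_inv₀]; exact inv_mem hu
      | mul u v _ _ hu hv => rw [map_mul]; exact mul_mem hu hv
    | add u v _ _ hu hv => exact add_mem hu hv
    | inv u _ hu => exact inv_mem hu
    | mul u v _ _ hu hv => exact mul_mem hu hv
  -- Step B : τ has order 2
  have hτsq : τ ^ 2 = 1 := by
    ext z
    have hz : z ∈ IntermediateField.adjoin k {sF, x, y} := by rw [Stop]; trivial
    simp only [pow_two, AlgEquiv.mul_apply, AlgEquiv.one_apply]
    induction hz using IntermediateField.adjoin_induction with
    | mem w hw =>
      rcases hw with rfl | rfl | rfl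
      · rw [hτK, map_neg, hτK, neg_neg]
      · rw [hx, hy]
      · rw [hy, hx]
    | algebraMap b => rw [AlgEquiv.commutes, AlgEquiv.commutes]
    | add u v _ _ hu hv => rw [map_add, map_add, hu, hv]
    | inv u _ hu => rw [map_inv₀, map_inv₀, hu]
    | mul u v _ _ hu hv => rw [map_mul, map_mul, hu, hv]
  have hτ1 : τ ≠ 1 := by
    intro h
    apply hsF0
    have : τ sF = sF := by rw [h]; rfl
    rw [hτK] at this
    have h2sF : (2 : F) * sF = 0 := by
      rw [two_mul]
      nth_rewrite 1 [← this]
      ring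
    rcases mul_eq_zero.mp h2sF with h | h
    · exact absurd h h2F
    · exact h
  have hord : orderOf τ = 2 := orderOf_eq_prime hτsq hτ1
  -- Step C : L ≤ fixedField
  have hτs : τ s = s := by rw [hs_def, map_add, hx, hy, add_comm]
  have hτt : τ t = t := by rw [ht_def, map_mul, map_sub, hτK, hx, hy]; ring
  have hLle : L ≤ IntermediateField.fixedField (Subgroup.zpowers τ) := by
    rw [IntermediateField.le_iff_le]
    apply Subgroup.zpowers_le.mpr
    rw [IntermediateField.mem_fixingSubgroup_iff]
    intro z hz
    induction hz using IntermediateField.adjoin_induction with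
    | mem w hw => rcases hw with rfl | rfl
                  · exact hτs
                  · exact hτt
    | algebraMap b => exact τ.commutes b
    | add u v _ _ hu hv => rw [map_add, hu, hv]
    | inv u _ hu => rw [map_inv₀, hu]
    | mul u v _ _ hu hv => rw [map_mul, hu, hv]
  -- Step D : [F : L] ≤ 2
  have hmemL : ∀ z (hz : z ∈ L), z ∈ IntermediateField.adjoin L {sF} :=
    fun z hz => IntermediateField.algebraMap_mem (IntermediateField.adjoin L {sF}) ⟨z, hz⟩
  have hsL : s ∈ L := subset_adjoin _ _ (by simp)
  have htL : t ∈ L := subset_adjoin _ _ (by simp)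
  have hxval : x = (2:F)⁻¹ * (s + sF⁻¹ * t) := by
    rw [hs_def, ht_def]
    field_simp
    ring
  have hyval : y = (2:F)⁻¹ * (s - sF⁻¹ * t) := by
    rw [hs_def, ht_def]
    field_simp
    ring
  have h2L : ((2:F)⁻¹ : F) ∈ IntermediateField.adjoin L {sF} := by
    apply inv_mem
    rw [show ((2:F)) = algebraMap k F 2 from (map_ofNat (algebraMap k F) 2).symm]
    exact hmemL _ (IntermediateField.algebraMap_mem L 2)
  have hxA : x ∈ IntermediateField.adjoin L {sF} := by
    rw [hxval]
    exact mul_mem h2L (add_mem (hmemL _ hsL)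
      (mul_mem (inv_mem (subset_adjoin _ _ rfl)) (hmemL _ htL)))
  have hyA : y ∈ IntermediateField.adjoin L {sF} := by
    rw [hyval]
    exact mul_mem h2L (sub_mem (hmemL _ hsL)
      (mul_mem (inv_mem (subset_adjoin _ _ rfl)) (hmemL _ htL)))
  have htopL : IntermediateField.adjoin L {sF} = ⊤ := by
    rw [eq_top_iff]
    rintro z -
    have hz : z ∈ IntermediateField.adjoin k {sF, x, y} := by rw [Stop]; trivial
    induction hz using IntermediateField.adjoin_induction with
    | mem w hw =>
      rcases hw with rfl | rfl | rfl
      · exact subset_adjoin _ _ rfl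
      · exact hxA
      · exact hyA
    | algebraMap b =>
      exact hmemL _ (IntermediateField.algebraMap_mem L b)
    | add u v _ _ hu hv => exact add_mem hu hv
    | inv u _ hu => exact inv_mem hu
    | mul u v _ _ hu hv => exact mul_mem hu hv
  have haL : (algebraMap k F a) ∈ L := IntermediateField.algebraMap_mem L a
  have hintegral : IsIntegral L sF := by
    refine ⟨Polynomial.X ^ 2 - Polynomial.C ⟨algebraMap k F a, haL⟩, ?_, ?_⟩
    · apply Polynomial.monic_X_pow_sub_C
      · exact two_ne_zero
    · simp only [Polynomial.eval₂_sub, Polynomial.eval₂_X_pow, Polynomial.eval₂_C]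
      show sF ^ 2 - algebraMap L F ⟨algebraMap k F a, haL⟩ = 0
      rw [hsF2]
      show algebraMap k F a - algebraMap k F a = 0
      ring
  have hfdtop : FiniteDimensional L (IntermediateField.adjoin L {sF}) :=
    IntermediateField.adjoin.finiteDimensional hintegral
  have hfdL : FiniteDimensional L F := by
    rw [htopL] at hfdtop
    exact (IntermediateField.topEquiv (F := L) (E := F)).toLinearEquiv.finiteDimensional
  have hrankL : finrank L F ≤ 2 := by
    have h1 : finrank L (IntermediateField.adjoin L {sF}) = (minpoly L sF).natDegree :=
      IntermediateField.adjoin.finrank hintegral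
    have h2' : finrank L (IntermediateField.adjoin L {sF}) = finrank L F := by
      rw [htopL]; exact IntermediateField.finrank_top'
    have h3 : (minpoly L sF).natDegree ≤ 2 := by
      have hne : (Polynomial.X ^ 2 - Polynomial.C (⟨algebraMap k F a, haL⟩ : L) :
          Polynomial L) ≠ 0 := (Polynomial.monic_X_pow_sub_C _ two_ne_zero).ne_zero
      have hroot : Polynomial.aeval sF
          (Polynomial.X ^ 2 - Polynomial.C (⟨algebraMap k F a, haL⟩ : L)) = 0 := by
        simp only [map_sub, Polynomial.aeval_X_pow, Polynomial.aeval_C]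
        show sF ^ 2 - algebraMap L F ⟨algebraMap k F a, haL⟩ = 0
        rw [hsF2]
        show algebraMap k F a - algebraMap k F a = 0
        ring
      have := Polynomial.natDegree_le_natDegree (minpoly.degree_le_of_ne_zero L sF hne hroot)
      simpa using this
    omega
  -- Step E : Artin and conclusion
  have hfinz : Finite (Subgroup.zpowers τ) := by
    have : IsOfFinOrder τ := by rw [← orderOf_pos_iff, hord]; norm_num
    exact this.finite_zpowers
  have := Fintype.ofFinite (Subgroup.zpowers τ)
  have hArtin : finrank (IntermediateField.fixedField (Subgroup.zpowers τ)) F = 2 := by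
    have h1 : finrank (IntermediateField.fixedField (Subgroup.zpowers τ)) F
        = Fintype.card (Subgroup.zpowers τ) := FixedPoints.finrank_eq_card _ F
    rw [h1, ← Nat.card_eq_fintype_card, Nat.card_zpowers, hord]
  have hEq : IntermediateField.fixedField (Subgroup.zpowers τ) = L := by
    refine (IntermediateField.eq_of_le_of_finrank_le' hLle ?_).symm
    rw [hArtin]
    exact hrankL
  -- Step F : algebraic independence of s, t over k
  have hindK : AlgebraicIndependent K ![s, t] := by
    classical
    set e : MvPolynomial (Fin 2) K →ₐ[K] MvPolynomial (Fin 2) K :=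
      MvPolynomial.aeval ![MvPolynomial.X 0 + MvPolynomial.X 1,
        MvPolynomial.C sqa * (MvPolynomial.X 0 - MvPolynomial.X 1)] with he_def
    set e' : MvPolynomial (Fin 2) K →ₐ[K] MvPolynomial (Fin 2) K :=
      MvPolynomial.aeval ![MvPolynomial.C (2:K)⁻¹ *
          (MvPolynomial.X 0 + MvPolynomial.C sqa⁻¹ * MvPolynomial.X 1),
        MvPolynomial.C (2:K)⁻¹ *
          (MvPolynomial.X 0 - MvPolynomial.C sqa⁻¹ * MvPolynomial.X 1)] with he'_def
    have c1 : (MvPolynomial.C ((2:K)⁻¹) : MvPolynomial (Fin 2) K) * 2 = 1 := by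
      rw [show ((2:MvPolynomial (Fin 2) K)) = MvPolynomial.C (2:K) from
        (map_ofNat MvPolynomial.C 2).symm, ← map_mul, inv_mul_cancel₀ h2K, map_one]
    have c2 : (MvPolynomial.C (sqa⁻¹) : MvPolynomial (Fin 2) K) * MvPolynomial.C sqa = 1 := by
      rw [← map_mul, inv_mul_cancel₀ hsqa0, map_one]
    have hcomp : e'.comp e = AlgHom.id K (MvPolynomial (Fin 2) K) := by
      apply MvPolynomial.algHom_ext
      intro i
      fin_cases i <;>
        simp [he_def, he'_def]
      · linear_combination (MvPolynomial.X (0 : Fin 2) : MvPolynomial (Fin 2) K) * c1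
      · linear_combination (MvPolynomial.C sqa⁻¹ * MvPolynomial.C sqa *
            MvPolynomial.X (1 : Fin 2) : MvPolynomial (Fin 2) K) * c1
          + (MvPolynomial.X (1 : Fin 2) : MvPolynomial (Fin 2) K) * c2
    have hcompST : (MvPolynomial.aeval ![x, y] :
        MvPolynomial (Fin 2) K →ₐ[K] F).comp e = MvPolynomial.aeval ![s, t] := by
      apply MvPolynomial.algHom_ext
      intro i
      fin_cases i <;>
        simp [he_def, hs_def, ht_def, hsF_def, Algebra.smul_def]
    have einj : Function.Injective e := by
      intro p q h
      have hp := AlgHom.congr_fun hcomp p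
      have hq := AlgHom.congr_fun hcomp q
      simp only [AlgHom.comp_apply, AlgHom.id_apply] at hp hq
      rw [← hp, ← hq, h]
    have h1 : Function.Injective
        ((MvPolynomial.aeval ![x, y] : MvPolynomial (Fin 2) K →ₐ[K] F).comp e) := by
      rw [AlgHom.coe_comp]
      exact Function.Injective.comp (hind : Function.Injective _) einj
    rw [hcompST] at h1
    exact h1
  have hindk : AlgebraicIndependent k ![s, t] := hindK.restrictScalars hinjkK
  refine ⟨hEq, ![s, t], ?_, hindk, ?_⟩
  · intro i
    rw [hEq]
    fin_cases i
    · exact hsL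
    · exact htL
  · rw [hEq, hL_def]
    congr 1
    ext z
    simp [Fin.exists_fin_two]
    tauto
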